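/- Let H be a Hilbert space, φ : H → ℝ Fréchet differentiable and λ-convex with λ < 0, and 0 < τ with λ/2 + 1/τ > 0 and λτ > −1. Suppose ξ*, v ∈ H satisfy ξ* = v − (τ/2)(∇φ(ξ*) + ∇φ(v)). Then (1 + λτ)‖∇φ(ξ*)‖² ≤ (1 − λτ)‖∇φ(v)‖². -/

import Mathlib

open RealInnerProductSpace Filter Topology

lemma grad_lower_aux
    {H : Type*} [NormedAddCommGroup H] [InnerProductSpace ℝ H] [CompleteSpace H]
    (lam : ℝ) (φ : H → ℝ) (x y gx : H) (hg : HasGradientAt φ gx x)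
    (hconv : ∀ t ∈ Set.Icc (0:ℝ) 1,
      φ ((1 - t) • x + t • y) ≤
        (1 - t) * φ x + t * φ y - (lam / 2) * t * (1 - t) * ‖x - y‖ ^ 2) :
    ⟪gx, y - x⟫ ≤ φ y - φ x - (lam / 2) * ‖x - y‖ ^ 2 := by
  set f : ℝ → ℝ := fun t => φ (x + t • (y - x)) with hf
  have hline : ∀ t : ℝ, (1 - t) • x + t • y = x + t • (y - x) := by
    intro t; module
  have hc : HasDerivAt (fun t : ℝ => x + t • (y - x)) (y - x) 0 := by
    simpa using ((hasDerivAt_id (0:ℝ)).smul_const (y - x)).const_add x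
  have hd : HasDerivAt f ⟪gx, y - x⟫ 0 := by
    have hg' : HasFDerivAt φ (InnerProductSpace.toDual ℝ H gx)
        ((fun t : ℝ => x + t • (y - x)) 0) := by simpa using hg.hasFDerivAt
    have := hg'.comp_hasDerivAt 0 hc
    exact this
  have hslope : Tendsto (slope f 0) (𝓝[>] 0) (𝓝 ⟪gx, y - x⟫) :=
    (hasDerivAt_iff_tendsto_slope.mp hd).mono_left
      (nhdsWithin_mono _ (fun t ht => ne_of_gt ht))
  have hG : Tendsto (fun t : ℝ => φ y - φ x - (lam / 2) * (1 - t) * ‖x - y‖ ^ 2)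
      (𝓝[>] 0) (𝓝 (φ y - φ x - (lam / 2) * ‖x - y‖ ^ 2)) := by
    have : Tendsto (fun t : ℝ => φ y - φ x - (lam / 2) * (1 - t) * ‖x - y‖ ^ 2)
        (𝓝 0) (𝓝 (φ y - φ x - (lam / 2) * (1 - (0:ℝ)) * ‖x - y‖ ^ 2)) := by
      have hcont : ContinuousAt
          (fun t : ℝ => φ y - φ x - (lam / 2) * (1 - t) * ‖x - y‖ ^ 2) 0 := by fun_prop
      simpa using hcont.tendsto
    simpa using this.mono_left nhdsWithin_le_nhds
  have hle : ∀ᶠ t in 𝓝[>] (0:ℝ),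
      slope f 0 t ≤ φ y - φ x - (lam / 2) * (1 - t) * ‖x - y‖ ^ 2 := by
    filter_upwards [Ioc_mem_nhdsGT_of_mem (Set.mem_Ico.mpr ⟨le_refl 0, one_pos⟩)]
      with t ht
    have ht0 : (0:ℝ) < t := ht.1
    have hmem : t ∈ Set.Icc (0:ℝ) 1 := ⟨le_of_lt ht.1, ht.2⟩
    have := hconv t hmem
    rw [hline t] at this
    have hf0 : f 0 = φ x := by simp [f]
    have hft : f t ≤ (1 - t) * φ x + t * φ y - lam / 2 * t * (1 - t) * ‖x - y‖ ^ 2 := this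
    rw [slope_def_field, sub_zero, div_le_iff₀ ht0]
    nlinarith [hft, hf0]
  exact le_of_tendsto_of_tendsto hslope hG hle

lemma grad_monotone
    {H : Type*} [NormedAddCommGroup H] [InnerProductSpace ℝ H] [CompleteSpace H]
    (lam : ℝ) (φ : H → ℝ) (g : H → H) (hg : ∀ x, HasGradientAt φ (g x) x)
    (hconv : ∀ x y : H, ∀ t ∈ Set.Icc (0:ℝ) 1,
      φ ((1 - t) • x + t • y) ≤
        (1 - t) * φ x + t * φ y - (lam / 2) * t * (1 - t) * ‖x - y‖ ^ 2)
    (x y : H) : lam * ‖x - y‖ ^ 2 ≤ ⟪g x - g y, x - y⟫ := by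
  have h1 := grad_lower_aux lam φ x y (g x) (hg x) (hconv x y)
  have h2 := grad_lower_aux lam φ y x (g y) (hg y) (hconv y x)
  rw [norm_sub_rev y x] at h2
  have e1 : ⟪g x - g y, x - y⟫ = -⟪g x, y - x⟫ - ⟪g y, x - y⟫ := by
    rw [inner_sub_left]
    have : (y - x : H) = -(x - y) := by abel
    rw [this, inner_neg_right]; ring
  rw [e1]; linarith

theorem trapezoid_gradient_bound_neg_lambda
    {H : Type*} [NormedAddCommGroup H] [InnerProductSpace ℝ H] [CompleteSpace H]
    (lam τ : ℝ) (hlam : lam < 0) (hτ : 0 < τ)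
    (hc : lam / 2 + 1 / τ > 0) (hlτ : lam * τ > -1)
    (φ : H → ℝ) (g : H → H) (hg : ∀ x, HasGradientAt φ (g x) x)
    (hconv : ∀ x y : H, ∀ t ∈ Set.Icc (0:ℝ) 1,
      φ ((1 - t) • x + t • y) ≤
        (1 - t) * φ x + t * φ y - (lam / 2) * t * (1 - t) * ‖x - y‖ ^ 2)
    (v ξs : H)
    (himp : ξs = v - (τ / 2) • (g ξs + g v)) :
    (1 + lam * τ) * ‖g ξs‖ ^ 2 ≤ (1 - lam * τ) * ‖g v‖ ^ 2 := by
  set a := g ξs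
  set b := g v
  have hmono := grad_monotone lam φ g hg hconv ξs v
  have hdiff : ξs - v = -((τ/2) • (a + b)) := by rw [himp]; abel
  have hinner : ⟪a - b, ξs - v⟫ = -(τ/2) * (‖a‖^2 - ‖b‖^2) := by
    rw [hdiff, inner_neg_right, real_inner_smul_right, inner_add_right,
      inner_sub_left, inner_sub_left, real_inner_self_eq_norm_sq,
      real_inner_self_eq_norm_sq, real_inner_comm a b, real_inner_comm b a]
    ring
  have hnorm : ‖ξs - v‖^2 = (τ/2)^2 * ‖a + b‖^2 := by
    rw [hdiff, norm_neg, norm_smul, mul_pow]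
    congr 1
    rw [Real.norm_eq_abs, sq_abs]
  have hab2 : ‖a + b‖^2 = ‖a‖^2 + 2 * ⟪a, b⟫ + ‖b‖^2 := by
    rw [← real_inner_self_eq_norm_sq, inner_add_add_self, real_inner_self_eq_norm_sq,
      real_inner_self_eq_norm_sq, real_inner_comm b a]; ring
  have habm : 2 * ⟪a, b⟫ ≤ ‖a‖^2 + ‖b‖^2 := by
    have h := real_inner_self_nonneg (x := a - b)
    rw [inner_sub_sub_self, real_inner_self_eq_norm_sq, real_inner_self_eq_norm_sq,
      real_inner_comm b a] at h
    have hcomm : ⟪b, a⟫ = ⟪a, b⟫ := real_inner_comm a b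
    linarith
  rw [hinner, hnorm, hab2] at hmono
  set S : ℝ := ‖a‖^2 + 2 * ⟪a, b⟫ + ‖b‖^2 with hS
  have hτ2 : (0:ℝ) < τ/2 := by linarith
  have h1 : lam * (τ/2) * S ≤ ‖b‖^2 - ‖a‖^2 := by
    refine le_of_mul_le_mul_left ?_ hτ2
    calc (τ/2) * (lam * (τ/2) * S) = lam * ((τ/2)^2 * S) := by ring
      _ ≤ -(τ/2) * (‖a‖^2 - ‖b‖^2) := hmono
      _ = (τ/2) * (‖b‖^2 - ‖a‖^2) := by ring
  have hSle : S ≤ 2 * ‖a‖^2 + 2 * ‖b‖^2 := by rw [hS]; linarith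
  have hneg : lam * (τ/2) ≤ 0 := by nlinarith
  have h2 : lam * (τ/2) * (2 * ‖a‖^2 + 2 * ‖b‖^2) ≤ lam * (τ/2) * S :=
    mul_le_mul_of_nonpos_left hSle hneg
  nlinarith [h1, h2]
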